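/- Let c1, c3, c4 > 0, q > 1, p_d > 1 and ν_d > 0. Let D ⊆ [0,∞) be a union of countably many pairwise disjoint intervals [t_k^a, t_k) with 0 ≤ t_1^a < t_1 ≤ t_2^a < t_2 ≤ ⋯, and suppose the total length of D ∩ [0, t] is at most t/p_d + ν_d for every t ≥ 0. Let y : [0,∞) → ℝ be continuous with y(t) > 0 for all t, differentiable at every t except possibly at the endpoints t_k^a, t_k, and suppose that at every point of differentiability, y′(t) ≤ −c1·y(t) − c3·y(t)^q if t ∉ D, and y′(t) ≤ c4·y(t) if t ∈ D. Then for all t ≥ 0: y(t)^{1−q} ≥ (c3/c1)·(exp((q−1)·((c1(p_d−1) − c4)/p_d)·t − (q−1)(c1 + c4)·ν_d) − 1). In particular, if c1(p_d − 1) − c4 > 0, then y(t) ≤ 1 for all t ≥ t̄, where t̄ is the unique solution of (c3/c1)·(exp((q−1)·((c1(p_d−1) − c4)/p_d)·t̄ − (q−1)(c1 + c4)·ν_d) − 1) = 1. -/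

import Mathlib

open MeasureTheory Set

private lemma mono_aux {f : ℝ → ℝ} {E : Set ℝ} (hE : E.Countable) {a b : ℝ} (hab : a ≤ b)
    (hf : ContinuousOn f (Icc a b))
    (hd : ∀ x, x ∈ Ico a b → x ∉ E → ∃ d, HasDerivAt f d x ∧ 0 ≤ d) :
    f a ≤ f b := by
  classical
  obtain ⟨e, he⟩ : ∃ e : ℕ → ℝ, E ⊆ Set.range e := by
    rcases (hE.insert a).exists_eq_range (insert_nonempty _ _) with ⟨e, he⟩
    exact ⟨e, (subset_insert a E).trans he.subset⟩
  have key : ∀ ε : ℝ, 0 < ε → f a - f b ≤ ε * (b - a) + ε * 2 := by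
    intro ε hε
    set g : ℕ → ℝ := fun n => ε * (1 / 2) ^ n with hgdef
    have hgpos : ∀ n, 0 < g n := fun n => by positivity
    have hgsum : Summable g := (summable_geometric_two).mul_left ε
    set c : ℝ → ℝ := fun t => ∑' n, if e n < t then g n else 0 with hcdef
    have hterm : ∀ (t : ℝ) (n : ℕ), 0 ≤ (if e n < t then g n else 0) := by
      intro t n; split
      · exact (hgpos n).le
      · exact le_rfl
    have htermle : ∀ (t : ℝ) (n : ℕ), (if e n < t then g n else 0) ≤ g n := by
      intro t n; split
      · exact le_rfl
      · exact (hgpos n).le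
    have hcsum : ∀ t : ℝ, Summable fun n => if e n < t then g n else 0 := fun t =>
      Summable.of_nonneg_of_le (hterm t) (htermle t) hgsum
    have hcnn : ∀ t : ℝ, 0 ≤ c t := fun t => tsum_nonneg (hterm t)
    have hcmono : ∀ s t : ℝ, s ≤ t → c s ≤ c t := by
      intro s t hst
      refine Summable.tsum_le_tsum (fun n => ?_) (hcsum s) (hcsum t)
      by_cases h : e n < s
      · simp [h, h.trans_le hst]
      · simp only [if_neg h]
        exact hterm t n
    have hcle : ∀ t : ℝ, c t ≤ ε * 2 := by
      intro t
      calc c t ≤ ∑' n, g n := Summable.tsum_le_tsum (htermle t) (hcsum t) hgsum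
        _ = ε * 2 := by rw [hgdef, tsum_mul_left, tsum_geometric_two]
    have hjump : ∀ (N : ℕ) (u : ℝ), e N < u → c (e N) + g N ≤ c u := by
      intro N u hu
      have hs2 : Summable fun n => if n = N then g N else 0 := ⟨_, hasSum_ite_eq N (g N)⟩
      have heq : c (e N) + g N
          = ∑' n, ((if e n < e N then g n else 0) + if n = N then g N else 0) := by
        rw [Summable.tsum_add (hcsum _) hs2, tsum_ite_eq]
      rw [heq]
      refine Summable.tsum_le_tsum (fun n => ?_) ((hcsum _).add hs2) (hcsum u)
      by_cases hn : n = N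
      · subst hn; simp [lt_irrefl, hu]
      · simp only [if_neg hn, add_zero]
        by_cases h : e n < e N
        · simp [h, h.trans hu]
        · simp only [if_neg h]
          exact hterm u n
    set A : Set ℝ := {t : ℝ | t ∈ Icc a b ∧ f a - f t ≤ ε * (t - a) + c t} with hAdef
    have haA : a ∈ A := ⟨⟨le_rfl, hab⟩, by simpa using hcnn a⟩
    have hAne : A.Nonempty := ⟨a, haA⟩
    have hAbdd : BddAbove A := ⟨b, fun t ht => ht.1.2⟩
    set s := sSup A with hsdef
    have hsa : a ≤ s := le_csSup hAbdd haA
    have hsb : s ≤ b := csSup_le hAne fun t ht => ht.1.2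
    have hsA : s ∈ A := by
      set X : Set ℝ := Icc a s ∩ (fun t => f a - f t - ε * (t - a) - c s) ⁻¹' Iic 0 with hXdef
      have hsub : A ⊆ X := by
        intro t ht
        have hts : t ≤ s := le_csSup hAbdd ht
        refine ⟨⟨ht.1.1, hts⟩, ?_⟩
        have hc := hcmono t s hts
        simp only [mem_preimage, mem_Iic]
        linarith [ht.2]
      have hclosed : IsClosed X := by
        apply ContinuousOn.preimage_isClosed_of_isClosed _ isClosed_Icc isClosed_Iic
        have h1 : ContinuousOn f (Icc a s) := hf.mono (Icc_subset_Icc le_rfl hsb)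
        exact ((continuousOn_const.sub h1).sub
          ((continuous_const.mul (continuous_id.sub continuous_const)).continuousOn)).sub
          continuousOn_const
      have hscl : s ∈ closure A := csSup_mem_closure hAne hAbdd
      have hsX : s ∈ X := by
        have h := closure_mono hsub hscl
        rwa [hclosed.closure_eq] at h
      refine ⟨⟨hsa, hsb⟩, ?_⟩
      have h2 := hsX.2
      simp only [mem_preimage, mem_Iic] at h2
      linarith
    rcases eq_or_lt_of_le hsb with hsbe | hslt
    · have h2 := hsA.2
      rw [hsbe] at h2
      linarith [hcle b]
    · exfalso
      have hcontra : ∀ u, u ∈ A → u ≤ s := fun u hu => le_csSup hAbdd hu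
      by_cases hsE : s ∈ E
      · obtain ⟨N, hN⟩ := he hsE
        have hfc : ContinuousWithinAt f (Icc a b) s := hf s ⟨hsa, hsb⟩
        have htd : Filter.Tendsto f (nhdsWithin s (Ioo s b)) (nhds (f s)) :=
          hfc.mono_left (nhdsWithin_mono s (fun u hu => ⟨hsa.trans hu.1.le, hu.2.le⟩))
        have hev : ∀ᶠ u in nhdsWithin s (Ioo s b), |f u - f s| < g N := by
          have h := Metric.tendsto_nhds.1 htd (g N) (hgpos N)
          filter_upwards [h] with u hu using by rwa [Real.dist_eq] at hu
        have hne : (nhdsWithin s (Ioo s b)).NeBot := by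
          rw [nhdsWithin_Ioo_eq_nhdsGT hslt]; infer_instance
        obtain ⟨u, hufs, huIoo⟩ := (hev.and eventually_mem_nhdsWithin).exists
        have hus : s < u := huIoo.1
        have hjmp : c s + g N ≤ c u := by
          have := hjump N u (by rw [hN]; exact hus)
          rwa [hN] at this
        have huA : u ∈ A := by
          refine ⟨⟨hsa.trans hus.le, huIoo.2.le⟩, ?_⟩
          have h2 := hsA.2
          have h3 : f s - f u ≤ |f u - f s| := by
            rw [abs_sub_comm]; exact le_abs_self _
          have hεsa : ε * (s - a) ≤ ε * (u - a) := by nlinarith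
          linarith
        exact absurd (hcontra u huA) (not_le.2 hus)
      · obtain ⟨d, hder, hdnn⟩ := hd s ⟨hsa, hslt⟩ hsE
        have hslope : Filter.Tendsto (slope f s) (nhdsWithin s {s}ᶜ) (nhds d) :=
          hasDerivAt_iff_tendsto_slope.1 hder
        have hev : ∀ᶠ u in nhdsWithin s (Ioi s), -ε < slope f s u :=
          (hslope.mono_left (nhdsWithin_mono s fun u hu => ne_of_gt hu)).eventually
            (eventually_gt_nhds (by linarith))
        have hIoo : Ioo s b ∈ nhdsWithin s (Ioi s) := Ioo_mem_nhdsGT_of_mem ⟨le_rfl, hslt⟩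
        obtain ⟨u, hsl, huI⟩ := (hev.and (Filter.eventually_of_mem hIoo fun u hu => hu)).exists
        have hus : s < u := huI.1
        have hfu : f s - f u ≤ ε * (u - s) := by
          rw [slope_def_field] at hsl
          have h1 : -ε * (u - s) < f u - f s :=
            (lt_div_iff₀ (by linarith)).1 hsl
          nlinarith
        have huA : u ∈ A := by
          refine ⟨⟨hsa.trans hus.le, huI.2.le⟩, ?_⟩
          have h2 := hsA.2
          have h3 := hcmono s u hus.le
          have hεsa : ε * (s - a) + ε * (u - s) = ε * (u - a) := by ring
          linarith
        exact absurd (hcontra u huA) (not_le.2 hus)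
  have h2 : (0:ℝ) < b - a + 2 := by linarith
  refine sub_nonpos.1 (le_of_forall_pos_le_add fun δ hδ => ?_)
  have hε : 0 < δ / (b - a + 2) := div_pos hδ h2
  have hk := key _ hε
  have : δ / (b - a + 2) * (b - a) + δ / (b - a + 2) * 2 = δ := by
    field_simp
  linarith

theorem stmt_9 (c1 c3 c4 q pd νd : ℝ) (hc1 : 0 < c1) (hc3 : 0 < c3) (hc4 : 0 < c4)
    (hq : 1 < q) (hpd : 1 < pd) (hνd : 0 < νd)
    (ta tb : ℕ → ℝ) (hta0 : 0 ≤ ta 0)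
    (hord : ∀ k, ta k < tb k) (hord' : ∀ k, tb k ≤ ta (k + 1))
    (D : Set ℝ) (hD : D = ⋃ k, Ico (ta k) (tb k))
    (hdur : ∀ t : ℝ, 0 ≤ t → (volume (D ∩ Icc 0 t)).toReal ≤ t / pd + νd)
    (y : ℝ → ℝ)
    (hcont : ContinuousOn y (Ici 0))
    (hypos : ∀ t : ℝ, 0 ≤ t → 0 < y t)
    (hdiff : ∀ t : ℝ, 0 ≤ t → (∀ k, t ≠ ta k ∧ t ≠ tb k) → DifferentiableAt ℝ y t)
    (hoff : ∀ t : ℝ, 0 ≤ t → DifferentiableAt ℝ y t → t ∉ D →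
      deriv y t ≤ -c1 * y t - c3 * y t ^ q)
    (hon : ∀ t : ℝ, 0 ≤ t → DifferentiableAt ℝ y t → t ∈ D →
      deriv y t ≤ c4 * y t) :
    (∀ t : ℝ, 0 ≤ t →
      y t ^ (1 - q) ≥
        (c3 / c1) * (Real.exp ((q - 1) * ((c1 * (pd - 1) - c4) / pd) * t
          - (q - 1) * (c1 + c4) * νd) - 1)) ∧
    (0 < c1 * (pd - 1) - c4 →
      ∀ tbar : ℝ,
        (c3 / c1) * (Real.exp ((q - 1) * ((c1 * (pd - 1) - c4) / pd) * tbar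
          - (q - 1) * (c1 + c4) * νd) - 1) = 1 →
        ∀ t : ℝ, tbar ≤ t → y t ≤ 1) := by
  classical
  have hpd0 : (0:ℝ) < pd := lt_trans one_pos hpd
  have hta_mono : Monotone ta := monotone_nat_of_le_succ fun k => (hord k).le.trans (hord' k)
  have htb_mono : Monotone tb := monotone_nat_of_le_succ fun k => (hord' k).trans (hord (k+1)).le
  have hta_nn : ∀ k, 0 ≤ ta k := fun k => hta0.trans (hta_mono (Nat.zero_le k))
  have hDmeas : MeasurableSet D := by
    rw [hD]; exact MeasurableSet.iUnion fun k => measurableSet_Ico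
  have hsubD : ∀ k, Ico (ta k) (tb k) ⊆ D := fun k => by
    rw [hD]; exact subset_iUnion (fun k => Ico (ta k) (tb k)) k
  set μf : ℝ → ℝ := fun t => (volume (D ∩ Icc 0 t)).toReal with hμf
  have hfin : ∀ s t : ℝ, volume (D ∩ Icc s t) ≠ ⊤ := fun s t =>
    ((measure_mono inter_subset_right).trans_lt measure_Icc_lt_top).ne
  have hfin' : ∀ s t : ℝ, volume (D ∩ Ioc s t) ≠ ⊤ := fun s t =>
    ((measure_mono inter_subset_right).trans_lt measure_Ioc_lt_top).ne
  have hincr : ∀ s t : ℝ, 0 ≤ s → s ≤ t → μf t = μf s + (volume (D ∩ Ioc s t)).toReal := by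
    intro s t hs hst
    have hsplit : D ∩ Icc 0 t = (D ∩ Icc 0 s) ∪ (D ∩ Ioc s t) := by
      rw [← inter_union_distrib_left, Icc_union_Ioc_eq_Icc hs hst]
    have hdisj : Disjoint (D ∩ Icc 0 s) (D ∩ Ioc s t) := by
      refine Disjoint.mono inter_subset_right inter_subset_right ?_
      rw [Set.disjoint_left]
      rintro x ⟨_, h1⟩ ⟨h2, _⟩
      exact absurd h1 (not_le.2 h2)
    simp only [hμf]
    rw [hsplit, measure_union hdisj (hDmeas.inter measurableSet_Ioc),
      ENNReal.toReal_add (hfin 0 s) (hfin' s t)]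
  have hμmono : Monotone μf := fun s t hst =>
    ENNReal.toReal_mono (hfin 0 t)
      (measure_mono (inter_subset_inter_right _ (Icc_subset_Icc le_rfl hst)))
  have hIocvol : ∀ s t : ℝ, s ≤ t → (volume (Ioc s t)).toReal = t - s := by
    intro s t h; rw [Real.volume_Ioc, ENNReal.toReal_ofReal (by linarith)]
  have hμlip : ∀ s t : ℝ, s ≤ t → μf t - μf s ≤ t - s := by
    intro s t hst
    rcases le_or_gt 0 s with hs | hs
    · rw [hincr s t hs hst]
      have h1 : (volume (D ∩ Ioc s t)).toReal ≤ (volume (Ioc s t)).toReal :=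
        ENNReal.toReal_mono measure_Ioc_lt_top.ne (measure_mono inter_subset_right)
      rw [hIocvol s t hst] at h1
      linarith
    · have h1 : μf s = 0 := by
        have he : Icc (0:ℝ) s = ∅ := Icc_eq_empty (by linarith)
        simp [hμf, he]
      rcases le_or_gt 0 t with ht | ht
      · have h2 : μf t ≤ t := by
          have h3 : (volume (D ∩ Icc 0 t)).toReal ≤ (volume (Icc (0:ℝ) t)).toReal :=
            ENNReal.toReal_mono measure_Icc_lt_top.ne (measure_mono inter_subset_right)
          rwa [Real.volume_Icc, ENNReal.toReal_ofReal (by linarith), sub_zero] at h3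
        linarith
      · have he : Icc (0:ℝ) t = ∅ := Icc_eq_empty (by linarith)
        have h2 : μf t = 0 := by simp [hμf, he]
        linarith
  have hμlipW : LipschitzWith 1 μf := by
    apply LipschitzWith.of_dist_le_mul
    intro s t
    rw [Real.dist_eq, Real.dist_eq, NNReal.coe_one, one_mul]
    rcases le_total s t with h | h
    · rw [abs_of_nonpos (by linarith [hμmono h] : μf s - μf t ≤ 0),
        abs_of_nonpos (by linarith : s - t ≤ 0)]
      linarith [hμlip s t h]
    · rw [abs_of_nonneg (by linarith [hμmono h] : 0 ≤ μf s - μf t),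
        abs_of_nonneg (by linarith : 0 ≤ s - t)]
      linarith [hμlip t s h]
  have hμ0 : μf 0 = 0 := by
    have h0 : volume (D ∩ Icc (0:ℝ) 0) = 0 :=
      le_antisymm ((measure_mono inter_subset_right).trans
        (by simp [Icc_self] : volume (Icc (0:ℝ) 0) ≤ 0)) (zero_le)
    simp only [hμf]
    rw [h0, ENNReal.toReal_zero]
  have hderD : ∀ (k : ℕ) (s : ℝ), s ∈ Ioo (ta k) (tb k) → HasDerivAt μf 1 s := by
    intro k s hs
    have hs0 : 0 < s := lt_of_le_of_lt (hta_nn k) hs.1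
    have heq : μf =ᶠ[nhds s] fun x => μf s + (x - s) := by
      filter_upwards [isOpen_Ioo.mem_nhds hs] with x hx
      rcases le_total s x with h | h
      · rw [hincr s x hs0.le h]
        have hss : D ∩ Ioc s x = Ioc s x := inter_eq_self_of_subset_right
          (fun z hz => hsubD k ⟨(hs.1.trans hz.1).le, lt_of_le_of_lt hz.2 hx.2⟩)
        rw [hss, hIocvol s x h]
      · have hx0 : 0 < x := lt_of_le_of_lt (hta_nn k) hx.1
        have h2 := hincr x s hx0.le h
        have hss : D ∩ Ioc x s = Ioc x s := inter_eq_self_of_subset_right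
          (fun z hz => hsubD k ⟨(hx.1.trans hz.1).le, lt_of_le_of_lt hz.2 hs.2⟩)
        rw [hss, hIocvol x s h] at h2
        linarith
    have hbase : HasDerivAt (fun x : ℝ => μf s + (x - s)) 1 s := by
      simpa using ((hasDerivAt_id s).sub_const s).const_add (μf s)
    exact hbase.congr_of_eventuallyEq heq
  have hderO : ∀ s u v : ℝ, 0 < s → u < s → s < v → Ioo u v ∩ D = ∅ → HasDerivAt μf 0 s := by
    intro s u v hs0 hu hv hempty
    have hmem : Ioo (max u 0) v ∈ nhds s := isOpen_Ioo.mem_nhds ⟨max_lt hu hs0, hv⟩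
    have heq : μf =ᶠ[nhds s] fun _ => μf s := by
      filter_upwards [hmem] with x hx
      have hx0 : 0 < x := lt_of_le_of_lt (le_max_right u 0) hx.1
      rcases le_total s x with h | h
      · have hss : D ∩ Ioc s x = ∅ := by
          apply eq_empty_of_subset_empty
          rintro z ⟨hzD, hz1, hz2⟩
          rw [← hempty]
          exact ⟨⟨lt_trans (lt_of_le_of_lt (le_max_left u 0) (max_lt hu hs0)) hz1,
            lt_of_le_of_lt hz2 hx.2⟩, hzD⟩
        rw [hincr s x hs0.le h, hss]
        simp
      · have h2 := hincr x s hx0.le h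
        have hss : D ∩ Ioc x s = ∅ := by
          apply eq_empty_of_subset_empty
          rintro z ⟨hzD, hz1, hz2⟩
          rw [← hempty]
          exact ⟨⟨lt_trans (lt_of_le_of_lt (le_max_left u 0) hx.1) hz1,
            lt_of_le_of_lt hz2 hv⟩, hzD⟩
        rw [hss] at h2
        simp at h2
        linarith
    exact (hasDerivAt_const s (μf s)).congr_of_eventuallyEq heq
  set L := sSup (Set.range ta) with hLdef
  have hiso : ∀ s : ℝ, s ∉ D → s ≠ L → (∀ k, s ≠ ta k) → (∀ k, s ≠ tb k) →
      ∃ u v : ℝ, u < s ∧ s < v ∧ Ioo u v ∩ D = ∅ := by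
    intro s hsD hsL hsta hstb
    by_cases hall : ∀ k, ta k ≤ s
    · have hbdd : BddAbove (Set.range ta) := ⟨s, by rintro _ ⟨k, rfl⟩; exact hall k⟩
      have hLle : L ≤ s := csSup_le (range_nonempty ta) (by rintro _ ⟨k, rfl⟩; exact hall k)
      have hLlt : L < s := lt_of_le_of_ne hLle (fun h => hsL h.symm)
      refine ⟨L, s + 1, hLlt, by linarith, ?_⟩
      apply eq_empty_of_subset_empty
      rintro x ⟨hx1, hx2⟩
      rw [hD] at hx2
      obtain ⟨k, hk⟩ := mem_iUnion.1 hx2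
      have h1 : tb k ≤ L := le_trans (hord' k) (le_csSup hbdd ⟨k+1, rfl⟩)
      exact absurd hx1.1 (not_lt.2 (le_trans hk.2.le h1))
    · push_neg at hall
      have hex : ∃ k, s < ta k := hall
      have hKs : s < ta (Nat.find hex) := Nat.find_spec hex
      rcases Nat.eq_zero_or_pos (Nat.find hex) with hK0 | hKpos
      · rw [hK0] at hKs
        refine ⟨s - 1, ta 0, by linarith, hKs, ?_⟩
        apply eq_empty_of_subset_empty
        rintro x ⟨hx1, hx2⟩
        rw [hD] at hx2
        obtain ⟨k, hk⟩ := mem_iUnion.1 hx2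
        exact absurd hx1.2 (not_lt.2 (le_trans (hta_mono (Nat.zero_le k)) hk.1))
      · set j := Nat.find hex - 1 with hjdef
        have hjK : j + 1 = Nat.find hex := Nat.succ_pred_eq_of_pos hKpos
        have haj : ta j ≤ s := not_lt.1 (Nat.find_min hex (by omega))
        have hnot : s ∉ Ico (ta j) (tb j) := fun h => hsD (hsubD j h)
        have hbj' : tb j ≤ s := not_lt.1 (fun h => hnot ⟨haj, h⟩)
        have hbj : tb j < s := lt_of_le_of_ne hbj' (fun h => hstb j h.symm)
        have htaj1 : s < ta (j + 1) := by rw [hjK]; exact hKs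
        refine ⟨tb j, ta (j + 1), hbj, htaj1, ?_⟩
        apply eq_empty_of_subset_empty
        rintro x ⟨⟨hx1, hx2⟩, hxD⟩
        rw [hD] at hxD
        obtain ⟨k, hk⟩ := mem_iUnion.1 hxD
        rcases le_or_gt k j with hkj | hkj
        · exact absurd hx1 (not_lt.2 (le_trans hk.2.le (htb_mono hkj)))
        · exact absurd hx2 (not_lt.2 (le_trans (hta_mono hkj) hk.1))
  have hc31 : 0 < c3 / c1 := div_pos hc3 hc1
  set U : ℝ → ℝ := fun t => y t ^ (1 - q) + c3 / c1 with hUdef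
  have hUpos : ∀ t : ℝ, 0 ≤ t → 0 < U t := fun t ht =>
    add_pos (Real.rpow_pos_of_pos (hypos t ht) _) hc31
  set α := (q - 1) * c1 with hαdef
  set β := (q - 1) * (c1 + c4) with hβdef
  set φ : ℝ → ℝ := fun t => Real.log (U t) - (α * t - β * μf t) with hφdef
  have hφcont : ContinuousOn φ (Ici 0) := by
    have hUcont : ContinuousOn U (Ici 0) :=
      (hcont.rpow_const (fun x hx => Or.inl (hypos x hx).ne')).add continuousOn_const
    exact (hUcont.log (fun x hx => (hUpos x hx).ne')).sub
      (((continuous_const.mul continuous_id).sub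
        (continuous_const.mul hμlipW.continuous)).continuousOn)
  set E : Set ℝ := insert 0 (insert L (Set.range ta ∪ Set.range tb)) with hEdef
  have hEc : E.Countable :=
    ((((countable_range ta).union (countable_range tb)).insert L).insert 0)
  have hφd : ∀ x : ℝ, 0 ≤ x → x ∉ E → ∃ d, HasDerivAt φ d x ∧ 0 ≤ d := by
    intro x hx hxE
    simp only [hEdef, mem_insert_iff, mem_union, mem_range, not_or, not_exists] at hxE
    obtain ⟨hx0, hxL, hxta, hxtb⟩ := hxE
    have hxpos : 0 < x := hx.lt_of_ne (fun h => hx0 h.symm)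
    have hyd : DifferentiableAt ℝ y x :=
      hdiff x hx (fun k => ⟨fun h => hxta k h.symm, fun h => hxtb k h.symm⟩)
    have hy := hyd.hasDerivAt
    have hyx : 0 < y x := hypos x hx
    have hW : HasDerivAt (fun u => y u ^ (1 - q))
        (deriv y x * (1 - q) * y x ^ (1 - q - 1)) x := hy.rpow_const (Or.inl hyx.ne')
    have hUd : HasDerivAt U (deriv y x * (1 - q) * y x ^ (1 - q - 1)) x := hW.add_const _
    have hUx : 0 < U x := hUpos x hx
    have hm : (1 - q) * y x ^ (1 - q - 1) < 0 :=
      mul_neg_of_neg_of_pos (by linarith) (Real.rpow_pos_of_pos hyx _)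
    have hI1 : y x * y x ^ (1 - q - 1) = y x ^ (1 - q) := by
      calc y x * y x ^ (1 - q - 1) = y x ^ (1:ℝ) * y x ^ (1 - q - 1) := by rw [Real.rpow_one]
        _ = y x ^ (1 + (1 - q - 1)) := (Real.rpow_add hyx _ _).symm
        _ = y x ^ (1 - q) := by ring_nf
    have hUxval : U x = y x ^ (1 - q) + c3 / c1 := rfl
    by_cases hxD : x ∈ D
    · have hxD' := hxD
      rw [hD] at hxD'
      obtain ⟨k, hk⟩ := mem_iUnion.1 hxD'
      have hkIoo : x ∈ Ioo (ta k) (tb k) :=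
        ⟨lt_of_le_of_ne hk.1 (hxta k), hk.2⟩
      have hμd : HasDerivAt μf 1 x := hderD k x hkIoo
      have hlin : HasDerivAt (fun t => α * t - β * μf t) (α * 1 - β * 1) x :=
        ((hasDerivAt_id x).const_mul α).sub (hμd.const_mul β)
      refine ⟨_, (hUd.log hUx.ne').sub hlin, ?_⟩
      have hyb := hon x hx hyd hxD
      have hmul : c4 * y x * ((1 - q) * y x ^ (1 - q - 1))
          ≤ deriv y x * ((1 - q) * y x ^ (1 - q - 1)) :=
        mul_le_mul_of_nonpos_right hyb hm.le
      have hrhs : c4 * y x * ((1 - q) * y x ^ (1 - q - 1))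
          = (1 - q) * c4 * (y x ^ (1 - q)) := by
        rw [← hI1]; ring
      have hkey : (α * 1 - β * 1) * U x ≤ deriv y x * (1 - q) * y x ^ (1 - q - 1) := by
        have h1 : (α * 1 - β * 1) * U x
            = (1 - q) * c4 * (y x ^ (1 - q)) + (1 - q) * c4 * (c3 / c1) := by
          rw [hαdef, hβdef, hUxval]; ring
        have h2 : (1 - q) * c4 * (c3 / c1) ≤ 0 := by nlinarith [mul_pos hc4 hc31]
        have h4 : (1 - q) * c4 * (y x ^ (1 - q))
            ≤ deriv y x * ((1 - q) * y x ^ (1 - q - 1)) := by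
          rw [← hrhs]; exact hmul
        calc (α * 1 - β * 1) * U x
            = (1 - q) * c4 * (y x ^ (1 - q)) + (1 - q) * c4 * (c3 / c1) := h1
          _ ≤ deriv y x * ((1 - q) * y x ^ (1 - q - 1)) := by linarith
          _ = deriv y x * (1 - q) * y x ^ (1 - q - 1) := by ring
      exact sub_nonneg.2 ((le_div_iff₀ hUx).2 hkey)
    · obtain ⟨u, v, huv1, huv2, hempty⟩ :=
        hiso x hxD (fun h => hxL h) (fun k h => hxta k h.symm) (fun k h => hxtb k h.symm)
      have hμd : HasDerivAt μf 0 x := hderO x u v hxpos huv1 huv2 hempty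
      have hlin : HasDerivAt (fun t => α * t - β * μf t) (α * 1 - β * 0) x :=
        ((hasDerivAt_id x).const_mul α).sub (hμd.const_mul β)
      refine ⟨_, (hUd.log hUx.ne').sub hlin, ?_⟩
      have hyb := hoff x hx hyd hxD
      have hmul : (-c1 * y x - c3 * y x ^ q) * ((1 - q) * y x ^ (1 - q - 1))
          ≤ deriv y x * ((1 - q) * y x ^ (1 - q - 1)) :=
        mul_le_mul_of_nonpos_right hyb hm.le
      have hI2 : y x ^ q * y x ^ (1 - q - 1) = 1 := by
        have h0 : q + (1 - q - 1) = 0 := by ring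
        rw [← Real.rpow_add hyx, h0, Real.rpow_zero]
      have hlhs : (-c1 * y x - c3 * y x ^ q) * ((1 - q) * y x ^ (1 - q - 1))
          = (q - 1) * c1 * (y x ^ (1 - q)) + (q - 1) * c3 := by
        linear_combination ((q - 1) * c1) * hI1 + ((q - 1) * c3) * hI2
      have hkey : (α * 1 - β * 0) * U x ≤ deriv y x * (1 - q) * y x ^ (1 - q - 1) := by
        have e3 : (q - 1) * c1 * (c3 / c1) = (q - 1) * c3 := by
          have hx9 : c1 * (c3 / c1) = c3 := by field_simp
          linear_combination (q - 1) * hx9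
        have h1 : (α * 1 - β * 0) * U x
            = (q - 1) * c1 * (y x ^ (1 - q)) + (q - 1) * c1 * (c3 / c1) := by
          rw [hαdef, hUxval]; ring
        have h3 : deriv y x * ((1 - q) * y x ^ (1 - q - 1))
            = deriv y x * (1 - q) * y x ^ (1 - q - 1) := by ring
        rw [h1, e3, ← h3, ← hlhs]
        exact hmul
      exact sub_nonneg.2 ((le_div_iff₀ hUx).2 hkey)
  have hmain : ∀ t : ℝ, 0 ≤ t → φ 0 ≤ φ t := by
    intro t ht
    exact mono_aux hEc ht (hφcont.mono (fun x hx => hx.1))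
      (fun x hx hxE => hφd x hx.1 hxE)
  have hβpos : 0 < β := by rw [hβdef]; exact mul_pos (by linarith) (by linarith)
  have hpart1 : ∀ t : ℝ, 0 ≤ t →
      y t ^ (1 - q) ≥ (c3 / c1) * (Real.exp ((q - 1) * ((c1 * (pd - 1) - c4) / pd) * t
        - (q - 1) * (c1 + c4) * νd) - 1) := by
    intro t ht
    have h1 := hmain t ht
    have h2 : μf t ≤ t / pd + νd := hdur t ht
    have h3 : Real.log (c3 / c1) ≤ Real.log (U 0) :=
      Real.log_le_log hc31
        (le_add_of_nonneg_left (Real.rpow_nonneg (hypos 0 le_rfl).le _))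
    have hφ0 : φ 0 = Real.log (U 0) := by
      simp [hφdef, hμ0]
    have hφt : φ t = Real.log (U t) - (α * t - β * μf t) := rfl
    have hEt : α * t - β * (t / pd + νd)
        = (q - 1) * ((c1 * (pd - 1) - c4) / pd) * t - (q - 1) * (c1 + c4) * νd := by
      rw [hαdef, hβdef]; field_simp; ring
    have h4 : Real.log (c3 / c1) + ((q - 1) * ((c1 * (pd - 1) - c4) / pd) * t
        - (q - 1) * (c1 + c4) * νd) ≤ Real.log (U t) := by
      have h7 : β * μf t ≤ β * (t / pd + νd) := by nlinarith
      rw [hφ0, hφt] at h1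
      linarith [hEt]
    have h8 := Real.exp_le_exp.2 h4
    rw [Real.exp_add, Real.exp_log hc31, Real.exp_log (hUpos t ht)] at h8
    have h9 : U t = y t ^ (1 - q) + c3 / c1 := rfl
    have h10 : (c3 / c1) * (Real.exp ((q - 1) * ((c1 * (pd - 1) - c4) / pd) * t
        - (q - 1) * (c1 + c4) * νd) - 1)
        = (c3 / c1) * Real.exp ((q - 1) * ((c1 * (pd - 1) - c4) / pd) * t
        - (q - 1) * (c1 + c4) * νd) - c3 / c1 := by ring
    rw [ge_iff_le, h10]
    linarith [h9 ▸ h8]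
  rw [hβdef]
  refine ⟨hpart1, ?_⟩
  intro hgap tbar htbar t htt
  have hKpos : 0 < (q - 1) * ((c1 * (pd - 1) - c4) / pd) :=
    mul_pos (by linarith) (div_pos hgap hpd0)
  have hCpos : 0 < (q - 1) * (c1 + c4) * νd :=
    mul_pos (mul_pos (by linarith) (by linarith)) hνd
  have hX1 : 0 < Real.exp ((q - 1) * ((c1 * (pd - 1) - c4) / pd) * tbar
      - (q - 1) * (c1 + c4) * νd) - 1 := by
    by_contra hcon
    push_neg at hcon
    have h : (c3 / c1) * (Real.exp ((q - 1) * ((c1 * (pd - 1) - c4) / pd) * tbar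
        - (q - 1) * (c1 + c4) * νd) - 1) ≤ 0 :=
      mul_nonpos_of_nonneg_of_nonpos hc31.le hcon
    linarith [htbar]
  have hA : 0 < (q - 1) * ((c1 * (pd - 1) - c4) / pd) * tbar
      - (q - 1) * (c1 + c4) * νd := by
    by_contra hcon
    push_neg at hcon
    have h := Real.exp_le_exp.2 hcon
    rw [Real.exp_zero] at h
    linarith
  have htbar0 : 0 < tbar := by
    by_contra hcon
    push_neg at hcon
    have h := mul_nonpos_of_nonneg_of_nonpos hKpos.le hcon
    linarith
  have ht0 : 0 ≤ t := le_trans htbar0.le htt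
  have hp := hpart1 t ht0
  have hAmono : (q - 1) * ((c1 * (pd - 1) - c4) / pd) * tbar
      - (q - 1) * (c1 + c4) * νd ≤ (q - 1) * ((c1 * (pd - 1) - c4) / pd) * t
      - (q - 1) * (c1 + c4) * νd := by
    have := mul_le_mul_of_nonneg_left htt hKpos.le
    linarith
  have hexp := Real.exp_le_exp.2 hAmono
  have hge1 : (1:ℝ) ≤ y t ^ (1 - q) := by
    have h9 : (c3 / c1) * (Real.exp ((q - 1) * ((c1 * (pd - 1) - c4) / pd) * tbar
        - (q - 1) * (c1 + c4) * νd) - 1)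
        ≤ (c3 / c1) * (Real.exp ((q - 1) * ((c1 * (pd - 1) - c4) / pd) * t
        - (q - 1) * (c1 + c4) * νd) - 1) :=
      mul_le_mul_of_nonneg_left (by linarith) hc31.le
    rw [htbar] at h9
    linarith [hp]
  by_contra hcon
  push_neg at hcon
  have hlt := Real.rpow_lt_one_of_one_lt_of_neg hcon (by linarith : 1 - q < 0)
  linarith
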